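/- Consider the two-client scalar instance f₁(x) = (1/2)(x-3)², f₂(x) = (x-50)², with f = (f₁+f₂)/2, and FedProx updates with both clients performing 2 local steps per round. For any step size 0 < η < 1/(2+β), the fixed point x̃* of FedProx satisfies |x̃* - x*| = 94η / (3(6 - η(5 + 3β))), where x* = argmin f; in particular the error is strictly positive for every fixed η > 0 and tends to 0 as η → 0. -/

import Mathlib

open Filter

lemma deriv_f1 (y : ℝ) : deriv (fun x : ℝ => (1 / 2) * (x - 3) ^ 2) y = y - 3 := by
  have h : HasDerivAt (fun x : ℝ => (1 / 2) * (x - 3) ^ 2)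
      ((1 / 2) * (2 * (y - 3) ^ 1 * 1)) y :=
    (((hasDerivAt_id y).sub_const 3).pow 2).const_mul (1 / 2 : ℝ)
  rw [h.deriv]; ring

lemma deriv_f2 (y : ℝ) : deriv (fun x : ℝ => (x - 50) ^ 2) y = 2 * (y - 50) := by
  have h : HasDerivAt (fun x : ℝ => (x - 50) ^ 2)
      (2 * (y - 50) ^ 1 * 1) y :=
    ((hasDerivAt_id y).sub_const 50).pow 2
  rw [h.deriv]; ring

/-- For the two-client scalar instance `f₁(x) = (1/2)(x-3)²`, `f₂(x) = (x-50)²`, two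
local FedProx steps per round, and any step size `0 < η < 1/(2+β)`: the FedProx round
map has a unique fixed point `x̃*`, it satisfies
`|x̃* - x*| = 94η/(3(6 - η(5 + 3β)))` where `x* = 103/3 = argmin f`, this error is
strictly positive, and it tends to `0` as `η → 0⁺`. -/
theorem fedprox_fixed_point_error (β : ℝ) (hβ : 0 ≤ β)
    (η : ℝ) (hη : 0 < η) (hη' : η < 1 / (2 + β))
    (f₁ f₂ : ℝ → ℝ)
    (hf₁ : ∀ x, f₁ x = (1 / 2) * (x - 3) ^ 2)
    (hf₂ : ∀ x, f₂ x = (x - 50) ^ 2)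
    (step : (ℝ → ℝ) → ℝ → ℝ → ℝ)
    (hstep : ∀ g xb y, step g xb y = y - η * (deriv g y + β * (y - xb)))
    (Φ : ℝ → ℝ)
    (hΦ : ∀ xb, Φ xb =
      (step f₁ xb (step f₁ xb xb) + step f₂ xb (step f₂ xb xb)) / 2) :
    (∃! xt : ℝ, Φ xt = xt) ∧
    (∀ xt : ℝ, Φ xt = xt →
      |xt - 103 / 3| = 94 * η / (3 * (6 - η * (5 + 3 * β)))) ∧
    0 < 94 * η / (3 * (6 - η * (5 + 3 * β))) ∧
    Tendsto (fun s : ℝ => 94 * s / (3 * (6 - s * (5 + 3 * β))))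
      (nhdsWithin 0 (Set.Ioi 0)) (nhds 0) := by
  have hf₁' : f₁ = fun x : ℝ => (1 / 2) * (x - 3) ^ 2 := funext hf₁
  have hf₂' : f₂ = fun x : ℝ => (x - 50) ^ 2 := funext hf₂
  subst hf₁' hf₂'
  have h2b : (0 : ℝ) < 2 + β := by linarith
  have hηb : η * (2 + β) < 1 := (lt_div_iff₀ h2b).mp hη'
  have hD : 0 < 6 - η * (5 + 3 * β) := by nlinarith
  have hD3 : (3 : ℝ) * (6 - η * (5 + 3 * β)) ≠ 0 := by positivity
  -- the key factorization of the fixed-point equation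
  have hfac : ∀ xt : ℝ, Φ xt - xt =
      (η / 2) * ((206 - η * (203 + 103 * β)) - (6 - η * (5 + 3 * β)) * xt) := by
    intro xt
    rw [hΦ, hstep, hstep, hstep, hstep, deriv_f1, deriv_f2, deriv_f1, deriv_f2]
    ring
  set X : ℝ := (206 - η * (203 + 103 * β)) / (6 - η * (5 + 3 * β)) with hX
  have hiff : ∀ xt : ℝ, Φ xt = xt ↔ xt = X := by
    intro xt
    constructor
    · intro h
      have h0 : Φ xt - xt = 0 := by rw [h]; ring
      rw [hfac xt] at h0
      have h1 : (206 - η * (203 + 103 * β)) - (6 - η * (5 + 3 * β)) * xt = 0 := by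
        rcases mul_eq_zero.mp h0 with h | h
        · exact absurd h (by positivity)
        · exact h
      rw [hX]
      rw [eq_div_iff hD.ne']
      linarith
    · intro h
      subst h
      have : Φ X - X = 0 := by
        rw [hfac X, hX]
        rw [mul_div_cancel₀ _ hD.ne']
        ring
      linarith [this]
  refine ⟨⟨X, (hiff X).mpr rfl, fun y hy => (hiff y).mp hy⟩, ?_, ?_, ?_⟩
  · intro xt hxt
    have hx : xt = X := (hiff xt).mp hxt
    subst hx
    have herr : X - 103 / 3 = -(94 * η / (3 * (6 - η * (5 + 3 * β)))) := by
      rw [hX]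
      rw [div_sub_div _ _ hD.ne' (by norm_num), neg_div', div_eq_div_iff (by positivity) (by positivity)]
      ring
    rw [herr, abs_neg, abs_of_pos (by positivity)]
  · positivity
  · have hc : ContinuousAt (fun s : ℝ => 94 * s / (3 * (6 - s * (5 + 3 * β)))) 0 := by
      apply ContinuousAt.div
      · fun_prop
      · fun_prop
      · norm_num
    have h0 : Tendsto (fun s : ℝ => 94 * s / (3 * (6 - s * (5 + 3 * β))))
        (nhdsWithin 0 (Set.Ioi 0)) (nhds (94 * 0 / (3 * (6 - 0 * (5 + 3 * β))))) :=
      hc.tendsto.mono_left nhdsWithin_le_nhds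
    simpa using h0
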